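/- arXiv:1806.01331 — 4 statements merged into one kernel-verified Lean document; each statement's English description precedes it below -/
import Mathlib

section
/- For all nonnegative integers n, k, i, j, m with i < j ≤ k ≤ n and m ≤ k - j, the following binomial coefficient identity holds: C(n, k-i) · C(k-i, j-i+m) · C(n-k+i, m) = C(n, k-j) · C(k-j, m) · C(n-k+j, j-i+m). -/
lemma aux_mul_fact (p q r s : ℕ) :
    (p+q+r+s).choose (q+p) * (q+p).choose q * (r+s).choose r *
      (p.factorial * q.factorial * r.factorial * s.factorial) =
      (p+q+r+s).factorial := by
  have h1 : (q+p).choose q * q.factorial * p.factorial = (q+p).factorial := by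
    have := Nat.choose_mul_factorial_mul_factorial (Nat.le_add_right q p)
    simpa using this
  have h2 : (r+s).choose r * r.factorial * s.factorial = (r+s).factorial := by
    have := Nat.choose_mul_factorial_mul_factorial (Nat.le_add_right r s)
    simpa using this
  have h3 : (p+q+r+s).choose (q+p) * (q+p).factorial * (r+s).factorial
      = (p+q+r+s).factorial := by
    have hle : q+p ≤ p+q+r+s := by omega
    have := Nat.choose_mul_factorial_mul_factorial hle
    have hsub : p+q+r+s - (q+p) = r+s := by omega
    rw [hsub] at this
    exact this
  calc (p+q+r+s).choose (q+p) * (q+p).choose q * (r+s).choose r *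
      (p.factorial * q.factorial * r.factorial * s.factorial)
      = (p+q+r+s).choose (q+p) * ((q+p).choose q * q.factorial * p.factorial)
        * ((r+s).choose r * r.factorial * s.factorial) := by ring
    _ = (p+q+r+s).choose (q+p) * (q+p).factorial * (r+s).factorial := by rw [h1, h2]
    _ = (p+q+r+s).factorial := h3

lemma aux_swap (p q r s : ℕ) :
    (p+q+r+s).choose (q+p) * (q+p).choose q * (r+s).choose r =
      (p+q+r+s).choose (r+p) * (r+p).choose r * (q+s).choose q := by
  have h1 := aux_mul_fact p q r s
  have h2 := aux_mul_fact p r q s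
  have hn : p+r+q+s = p+q+r+s := by ring
  rw [hn] at h2
  have hpos : 0 < p.factorial * q.factorial * r.factorial * s.factorial := by
    positivity
  apply Nat.eq_of_mul_eq_mul_right hpos
  rw [h1]
  rw [← h2]
  ring

theorem binomial_detailed_balance_identity
    (n k i j m : ℕ) (hij : i < j) (hjk : j ≤ k) (hkn : k ≤ n) (hm : m ≤ k - j) :
    n.choose (k - i) * (k - i).choose (j - i + m) * (n - k + i).choose m =
      n.choose (k - j) * (k - j).choose m * (n - k + j).choose (j - i + m) := by
  by_cases hmn : m ≤ n - k + i
  · obtain ⟨p, q, r, s, eq, er, e1, e2, e3, e4, e5⟩ :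
        ∃ p q r s, j - i + m = q ∧ m = r ∧ k - i = q + p ∧ n - k + i = r + s ∧
          k - j = r + p ∧ n - k + j = q + s ∧ n = p + q + r + s :=
      ⟨k - j - m, j - i + m, m, n - k + i - m, rfl, rfl, by omega, by omega, by omega,
        by omega, by omega⟩
    rw [eq, er, e1, e2, e3, e4, e5]
    exact aux_swap p q r s
  · have h1 : (n - k + i).choose m = 0 := Nat.choose_eq_zero_of_lt (by omega)
    have h2 : (n - k + j).choose (j - i + m) = 0 := Nat.choose_eq_zero_of_lt (by omega)
    rw [h1, h2, mul_zero, mul_zero]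
end

section
/- Let k ≥ 2 be a fixed integer and for 0 ≤ i < j ≤ k define p_i^j(n) = Σ_{m=0}^{k-j} C(k-i, j-i+m) · C(n-k+i, m) / C(n, j-i+2m) (each summand weighted by a probability Pr[α = j-i+2m] ∈ [0,1]). Then p_i^j(n) = O(n^{-(j-i)}) as n → ∞. -/
open Finset Asymptotics Filter

theorem level_up_transition_prob_isBigO
    (k i j : ℕ) (hk : 2 ≤ k) (hij : i < j) (hjk : j ≤ k)
    (Pr : ℕ → ℝ) (hPr0 : ∀ m, 0 ≤ Pr m) (hPr1 : ∀ m, Pr m ≤ 1) :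
    (fun n : ℕ => ∑ m ∈ Finset.range (k - j + 1),
        ((k - i).choose (j - i + m) * (n - k + i).choose m : ℝ) / (n.choose (j - i + 2 * m)) *
          Pr (j - i + 2 * m))
      =O[atTop] fun n : ℕ => (n : ℝ) ^ (-(j - i : ℤ)) := by
  apply Asymptotics.IsBigO.fun_sum
  intro m _
  set d := j - i with hd
  have hd1 : 1 ≤ d := by omega
  set r := d + 2 * m with hr
  rw [isBigO_iff]
  refine ⟨((k - i).choose (d + m) : ℝ) * 2 ^ r * (r.factorial), ?_⟩
  filter_upwards [eventually_ge_atTop (max k (2 * r)), eventually_ge_atTop 1] with n hn hn1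
  have hnk : k ≤ n := le_trans (le_max_left _ _) hn
  have hn2r : 2 * r ≤ n := le_trans (le_max_right _ _) hn
  have hrn : r ≤ n := by omega
  have hn0 : (0 : ℝ) < n := by exact_mod_cast hn1
  have hY0 : (0 : ℝ) < n.choose r := by exact_mod_cast Nat.choose_pos hrn
  -- upper bound on (n-k+i).choose m
  have hB : ((n - k + i).choose m : ℝ) ≤ (n : ℝ) ^ m := by
    have h1 : (n - k + i).choose m ≤ n.choose m := Nat.choose_le_choose m (by omega)
    have h2 : n.choose m ≤ n ^ m := Nat.choose_le_pow n m
    exact_mod_cast le_trans h1 h2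
  -- lower bound on n.choose r
  have hY : (n : ℝ) ^ r / (2 ^ r * r.factorial) ≤ (n.choose r : ℝ) := by
    have h1 : (((n + 1 - r : ℕ) ^ r : ℕ) : ℝ) / r.factorial ≤ (n.choose r : ℝ) := by
      have := Nat.pow_le_choose (α := ℝ) r n
      push_cast at this ⊢
      exact this
    have h2 : (n : ℝ) / 2 ≤ ((n + 1 - r : ℕ) : ℝ) := by
      rw [div_le_iff₀ (by norm_num)]
      exact_mod_cast (show n ≤ (n + 1 - r) * 2 by omega)
    have h3 : ((n : ℝ) / 2) ^ r ≤ (((n + 1 - r : ℕ) ^ r : ℕ) : ℝ) := by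
      push_cast
      exact pow_le_pow_left₀ (by positivity) h2 r
    calc (n : ℝ) ^ r / (2 ^ r * r.factorial)
        = ((n : ℝ) / 2) ^ r / r.factorial := by rw [div_pow]; ring
      _ ≤ (((n + 1 - r : ℕ) ^ r : ℕ) : ℝ) / r.factorial := by gcongr
      _ ≤ (n.choose r : ℝ) := h1
  -- rewrite rhs
  have hrhs : ‖(n : ℝ) ^ (-((j : ℤ) - i))‖ = 1 / (n : ℝ) ^ d := by
    rw [show ((j : ℤ) - i) = (d : ℤ) by omega]
    rw [Real.norm_eq_abs, zpow_neg, zpow_natCast, abs_inv, abs_of_pos (by positivity), one_div]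
  -- main bound
  have hterm0 : (0 : ℝ) ≤ ((k - i).choose (d + m) * (n - k + i).choose m : ℝ) /
      (n.choose r) * Pr r := mul_nonneg (by positivity) (hPr0 r)
  rw [Real.norm_eq_abs, abs_of_nonneg hterm0, hrhs]
  have hA0 : (0 : ℝ) ≤ ((k - i).choose (d + m) : ℝ) := by positivity
  have step1 : ((k - i).choose (d + m) * (n - k + i).choose m : ℝ) / (n.choose r) * Pr r
      ≤ ((k - i).choose (d + m) : ℝ) * ((n : ℝ) ^ m / ((n : ℝ) ^ r / (2 ^ r * r.factorial))) := by
    have h1 : ((k - i).choose (d + m) * (n - k + i).choose m : ℝ) / (n.choose r) * Pr r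
        ≤ ((k - i).choose (d + m) * (n - k + i).choose m : ℝ) / (n.choose r) := by
      nth_rewrite 2 [← mul_one (((k - i).choose (d + m) * (n - k + i).choose m : ℝ) / (n.choose r))]
      exact mul_le_mul_of_nonneg_left (hPr1 r) (by positivity)
    refine h1.trans ?_
    rw [mul_div_assoc]
    apply mul_le_mul_of_nonneg_left _ hA0
    exact div_le_div₀ (by positivity) hB (by positivity) hY
  refine step1.trans ?_
  have hpow : (n : ℝ) ^ m / ((n : ℝ) ^ r / (2 ^ r * r.factorial))
      = 2 ^ r * r.factorial * ((n : ℝ) ^ m / (n : ℝ) ^ r) := by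
    field_simp
  rw [hpow]
  have hmr : (n : ℝ) ^ m / (n : ℝ) ^ r ≤ 1 / (n : ℝ) ^ d := by
    rw [div_le_div_iff₀ (by positivity) (by positivity), one_mul, ← pow_add]
    apply pow_le_pow_right₀ (by exact_mod_cast hn1)
    omega
  calc ((k - i).choose (d + m) : ℝ) * (2 ^ r * r.factorial * ((n : ℝ) ^ m / (n : ℝ) ^ r))
      ≤ ((k - i).choose (d + m) : ℝ) * (2 ^ r * r.factorial * (1 / (n : ℝ) ^ d)) := by
        apply mul_le_mul_of_nonneg_left _ hA0
        exact mul_le_mul_of_nonneg_left hmr (by positivity)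
    _ = ((k - i).choose (d + m) : ℝ) * 2 ^ r * r.factorial * (1 / (n : ℝ) ^ d) := by ring
end

section
/- Fix an integer k ≥ 2 and a constant γ > 0, and define d(γ) = e^{-γ} Σ_{i=1}^{k} γ^i / i!. Then d'(γ) = e^{-γ}(1 - γ^k / k!), d(0) = 0, lim_{γ→∞} d(γ) = 0, and d attains its unique maximum on [0, ∞) at γ = (k!)^{1/k}. -/
open Finset Filter Real

private lemma key_identity (k : ℕ) (γ : ℝ) :
    (∑ i ∈ Finset.Icc 1 k, (i : ℝ) * γ ^ (i - 1) / (i.factorial : ℝ)) -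
      ∑ i ∈ Finset.Icc 1 k, γ ^ i / (i.factorial : ℝ) = 1 - γ ^ k / (k.factorial : ℝ) := by
  induction k with
  | zero => simp
  | succ n ih =>
    rw [Finset.sum_Icc_succ_top (Nat.le_add_left 1 n), Finset.sum_Icc_succ_top (Nat.le_add_left 1 n)]
    have hfac : ((n + 1).factorial : ℝ) = (n + 1) * (n.factorial : ℝ) := by
      rw [Nat.factorial_succ]; push_cast; ring
    have h1 : (0 : ℝ) < (n.factorial : ℝ) := by positivity
    have h2 : (0 : ℝ) < (n : ℝ) + 1 := by positivity
    have : ((n + 1 : ℕ) : ℝ) * γ ^ ((n + 1) - 1) / ((n + 1).factorial : ℝ)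
        = γ ^ n / (n.factorial : ℝ) := by
      rw [hfac]
      push_cast
      rw [mul_div_mul_left _ _ h2.ne']
    rw [this]
    have := ih
    push_cast
    linarith [ih]

private lemma gstar_pow (k : ℕ) (hk : k ≠ 0) :
    ((k.factorial : ℝ) ^ ((1 : ℝ) / k)) ^ k = (k.factorial : ℝ) := by
  have h0 : (0 : ℝ) ≤ (k.factorial : ℝ) := by positivity
  rw [← Real.rpow_natCast ((k.factorial : ℝ) ^ ((1 : ℝ) / k)) k, ← Real.rpow_mul h0]
  rw [one_div, inv_mul_cancel₀ (by exact_mod_cast hk), Real.rpow_one]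

theorem optimal_mutation_rate_standard_bit_mutation
    (k : ℕ) (hk : 2 ≤ k) :
    let d : ℝ → ℝ := fun γ => Real.exp (-γ) * ∑ i ∈ Finset.Icc 1 k, γ ^ i / (i.factorial : ℝ)
    let γstar : ℝ := (k.factorial : ℝ) ^ ((1 : ℝ) / k)
    (∀ γ : ℝ, HasDerivAt d (Real.exp (-γ) * (1 - γ ^ k / (k.factorial : ℝ))) γ) ∧
      d 0 = 0 ∧
      Tendsto d atTop (nhds 0) ∧
      (∀ γ ∈ Set.Ici (0 : ℝ), γ ≠ γstar → d γ < d γstar) := by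
  intro d γstar
  have hk0 : k ≠ 0 := by omega
  have hfacpos : (0 : ℝ) < (k.factorial : ℝ) := by positivity
  -- derivative
  have hderiv : ∀ γ : ℝ,
      HasDerivAt d (Real.exp (-γ) * (1 - γ ^ k / (k.factorial : ℝ))) γ := by
    intro γ
    have hS : HasDerivAt (fun x : ℝ => ∑ i ∈ Finset.Icc 1 k, x ^ i / (i.factorial : ℝ))
        (∑ i ∈ Finset.Icc 1 k, (i : ℝ) * γ ^ (i - 1) / (i.factorial : ℝ)) γ := by
      apply HasDerivAt.fun_sum
      intro i _
      exact (hasDerivAt_pow i γ).div_const _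
    have hE : HasDerivAt (fun x : ℝ => Real.exp (-x)) (-Real.exp (-γ)) γ := by
      simpa using (hasDerivAt_neg γ).exp
    have := hE.mul hS
    refine this.congr_deriv ?_
    rw [← key_identity k γ]
    ring
  refine ⟨hderiv, ?_, ?_, ?_⟩
  · -- d 0 = 0
    simp only [d]
    rw [Finset.sum_eq_zero, mul_zero]
    intro i hi
    rw [Finset.mem_Icc] at hi
    rw [zero_pow (by omega : i ≠ 0), zero_div]
  · -- limit
    have : d = fun γ => ∑ i ∈ Finset.Icc 1 k, γ ^ i * Real.exp (-γ) / (i.factorial : ℝ) := by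
      funext γ
      simp only [d]
      rw [Finset.mul_sum]
      refine Finset.sum_congr rfl fun i _ => by ring
    rw [this]
    have h0 : (0 : ℝ) = ∑ i ∈ Finset.Icc 1 k, (0 : ℝ) / (i.factorial : ℝ) := by simp
    rw [h0]
    apply tendsto_finset_sum
    intro i _
    exact (tendsto_pow_mul_exp_neg_atTop_nhds_zero i).div_const _
  · -- unique maximum
    have hγpos : 0 < γstar := Real.rpow_pos_of_pos hfacpos _
    have hγpow : γstar ^ k = (k.factorial : ℝ) := gstar_pow k hk0
    have hdiff : Differentiable ℝ d := fun x => (hderiv x).differentiableAt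
    have hcont : Continuous d := hdiff.continuous
    have hmono : StrictMonoOn d (Set.Icc 0 γstar) := by
      apply strictMonoOn_of_deriv_pos (convex_Icc _ _) hcont.continuousOn
      intro x hx
      rw [interior_Icc] at hx
      rw [(hderiv x).deriv]
      apply mul_pos (Real.exp_pos _)
      have hxk : x ^ k < (k.factorial : ℝ) := by
        rw [← hγpow]
        exact pow_lt_pow_left₀ hx.2 hx.1.le hk0
      have : x ^ k / (k.factorial : ℝ) < 1 := (div_lt_one hfacpos).mpr hxk
      linarith
    have hanti : StrictAntiOn d (Set.Ici γstar) := by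
      apply strictAntiOn_of_deriv_neg (convex_Ici _) hcont.continuousOn
      intro x hx
      rw [interior_Ici] at hx
      rw [(hderiv x).deriv]
      apply mul_neg_of_pos_of_neg (Real.exp_pos _)
      have hxk : (k.factorial : ℝ) < x ^ k := by
        rw [← hγpow]
        exact pow_lt_pow_left₀ hx hγpos.le hk0
      have : 1 < x ^ k / (k.factorial : ℝ) := (one_lt_div hfacpos).mpr hxk
      linarith
    intro γ hγ hne
    rcases lt_or_gt_of_ne hne with h | h
    · exact hmono ⟨hγ, h.le⟩ ⟨hγpos.le, le_refl _⟩ h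
    · exact hanti (Set.self_mem_Ici) h.le h
end

section
/- Let k ≥ 2 and let P = (p_i^j) be a k×k real matrix with entries in [0,1] such that p_i^j = O(1/n) for all j > i, and p_i^i ≤ 1 - c for all i ≥ 1 where c > 0 satisfies c = ω(n^{-1/(k-1)}). Set ε = c^{k-1}/((k-1)·2^k). Then for n large enough, the characteristic polynomial χ_P(λ) = det(P - λI) has at most one root in the interval [1 - ε, 1], and no root in (-∞, -1/2]. -/
open Finset Filter Asymptotics Matrix Polynomial

section aux1
variable {s : ℕ}

lemma matINV (A : Matrix (Fin s) (Fin s) ℝ) (v : Fin s → ℝ)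
    (hv : ∀ i, 0 < v i) (hA : ∀ i j, 0 ≤ A i j) (θ lam : ℝ) (hth0 : 0 ≤ θ)
    (hth : θ < lam) (hAv : ∀ i, A.mulVec v i ≤ θ * v i) :
    IsUnit (lam • (1 : Matrix (Fin s) (Fin s) ℝ) - A).det ∧
      ∀ i j, 0 ≤ (lam • (1 : Matrix (Fin s) (Fin s) ℝ) - A)⁻¹ i j := by
  have hlam : 0 < lam := hth0.trans_lt hth
  set C : Matrix (Fin s) (Fin s) ℝ := lam⁻¹ • A with hCdef
  set t : ℝ := θ / lam with htdef
  have ht0 : 0 ≤ t := div_nonneg hth0 hlam.le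
  have ht1 : t < 1 := (div_lt_one hlam).2 hth
  have hC : ∀ i j, 0 ≤ C i j := fun i j => by
    simp only [hCdef, Matrix.smul_apply, smul_eq_mul]
    exact mul_nonneg (inv_nonneg.2 hlam.le) (hA i j)
  have hCv : ∀ i, C.mulVec v i ≤ t * v i := by
    intro i
    have h1 : C.mulVec v i = lam⁻¹ * A.mulVec v i := by
      simp [hCdef, Matrix.mulVec, dotProduct, Finset.mul_sum, mul_assoc]
    rw [h1, htdef, div_eq_inv_mul, mul_assoc]
    exact mul_le_mul_of_nonneg_left (hAv i) (inv_nonneg.2 hlam.le)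
  have hpow : ∀ m, ∀ i j, 0 ≤ (C ^ m) i j := by
    intro m
    induction m with
    | zero => intro i j; rw [pow_zero]; by_cases h : i = j <;> simp [Matrix.one_apply, h]
    | succ m ih =>
      intro i j
      rw [pow_succ, Matrix.mul_apply]
      exact Finset.sum_nonneg fun l _ => mul_nonneg (ih i l) (hC l j)
  have hpowv : ∀ m i, (C ^ m).mulVec v i ≤ t ^ m * v i := by
    intro m
    induction m with
    | zero => intro i; simp [Matrix.one_mulVec]
    | succ m ih =>
      intro i
      rw [pow_succ', ← Matrix.mulVec_mulVec]
      calc C.mulVec ((C ^ m).mulVec v) i = ∑ j, C i j * ((C ^ m).mulVec v) j := rfl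
        _ ≤ ∑ j, C i j * (t ^ m * v j) :=
            Finset.sum_le_sum fun j _ => mul_le_mul_of_nonneg_left (ih j) (hC i j)
        _ = t ^ m * C.mulVec v i := by
            rw [show C.mulVec v i = ∑ j, C i j * v j from rfl, Finset.mul_sum]
            exact Finset.sum_congr rfl fun j _ => by ring
        _ ≤ t ^ m * (t * v i) := mul_le_mul_of_nonneg_left (hCv i) (pow_nonneg ht0 m)
        _ = t ^ (m + 1) * v i := by ring
  have hentry : ∀ m i j, (C ^ m) i j ≤ t ^ m * v i / v j := by
    intro m i j
    rw [le_div_iff₀ (hv j)]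
    calc (C ^ m) i j * v j ≤ ∑ l, (C ^ m) i l * v l :=
          Finset.single_le_sum (f := fun l => (C ^ m) i l * v l)
            (fun l _ => mul_nonneg (hpow m i l) (hv l).le) (Finset.mem_univ j)
      _ = (C ^ m).mulVec v i := rfl
      _ ≤ t ^ m * v i := hpowv m i
  have hinj : ∀ x : Fin s → ℝ, (1 - C).mulVec x = 0 → x = 0 := by
    intro x hx
    have hfix : C.mulVec x = x := by
      have := congrFun hx
      funext i
      have h2 := this i
      rw [Matrix.sub_mulVec, Matrix.one_mulVec] at hx
      have : x - C.mulVec x = 0 := hx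
      have := sub_eq_zero.1 this
      exact (congrFun this.symm i)
    have hiter : ∀ m, (C ^ m).mulVec x = x := by
      intro m
      induction m with
      | zero => simp [Matrix.one_mulVec]
      | succ m ih => rw [pow_succ, ← Matrix.mulVec_mulVec, hfix, ih]
    set K : ℝ := ∑ l, |x l| / v l with hK
    have hK0 : 0 ≤ K := Finset.sum_nonneg fun l _ => div_nonneg (abs_nonneg _) (hv l).le
    have hxb : ∀ m i, |x i| ≤ t ^ m * (v i * K) := by
      intro m i
      conv_lhs => rw [← hiter m]
      calc |((C ^ m).mulVec x) i| = |∑ l, (C ^ m) i l * x l| := rfl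
        _ ≤ ∑ l, |(C ^ m) i l * x l| := Finset.abs_sum_le_sum_abs _ _
        _ ≤ ∑ l, (t ^ m * v i / v l) * |x l| := by
            refine Finset.sum_le_sum fun l _ => ?_
            rw [abs_mul, abs_of_nonneg (hpow m i l)]
            exact mul_le_mul_of_nonneg_right (hentry m i l) (abs_nonneg _)
        _ = t ^ m * (v i * K) := by
            rw [hK, Finset.mul_sum, Finset.mul_sum]
            refine Finset.sum_congr rfl fun l _ => ?_
            field_simp
    funext i
    have h0 : |x i| ≤ 0 := by
      have htend : Filter.Tendsto (fun m : ℕ => t ^ m * (v i * K)) Filter.atTop (nhds 0) := by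
        simpa using (tendsto_pow_atTop_nhds_zero_of_lt_one ht0 ht1).mul_const (v i * K)
      exact ge_of_tendsto htend (Filter.Eventually.of_forall fun m => hxb m i)
    have := abs_nonneg (x i)
    have : |x i| = 0 := le_antisymm h0 this
    simpa using this
  have hdet1 : IsUnit (1 - C).det := by
    rw [isUnit_iff_ne_zero]
    intro h
    obtain ⟨y, hy0, hy⟩ := (Matrix.exists_mulVec_eq_zero_iff).2 h
    exact hy0 (hinj y hy)
  set B : Matrix (Fin s) (Fin s) ℝ := (1 - C)⁻¹ with hBdef
  have hB1 : (1 - C) * B = 1 := Matrix.mul_nonsing_inv _ hdet1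
  have hBrec : B = 1 + C * B := by
    rw [sub_mul, Matrix.one_mul] at hB1
    rw [← hB1]; abel
  have hrec : ∀ N : ℕ, B = (∑ m ∈ Finset.range N, C ^ m) + C ^ N * B := by
    intro N
    induction N with
    | zero => simp
    | succ N ih =>
      rw [Finset.sum_range_succ, pow_succ]
      calc B = (∑ m ∈ Finset.range N, C ^ m) + C ^ N * B := ih
        _ = (∑ m ∈ Finset.range N, C ^ m) + C ^ N * (1 + C * B) := by rw [← hBrec]
        _ = (∑ m ∈ Finset.range N, C ^ m) + C ^ N + C ^ N * C * B := by
            rw [mul_add, mul_one, mul_assoc]; abel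
  have hBnn : ∀ i j, 0 ≤ B i j := by
    intro i j
    set K : ℝ := ∑ l, v i / v l * |B l j| with hK
    have hbd : ∀ N : ℕ, -(t ^ N * K) ≤ B i j := by
      intro N
      have h1 : B i j = (∑ m ∈ Finset.range N, C ^ m) i j + (C ^ N * B) i j := by
        conv_lhs => rw [hrec N]
        simp [Matrix.add_apply]
      have h2 : 0 ≤ (∑ m ∈ Finset.range N, C ^ m) i j := by
        rw [Matrix.sum_apply]
        exact Finset.sum_nonneg fun m _ => hpow m i j
      have h3 : -(t ^ N * K) ≤ (C ^ N * B) i j := by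
        rw [Matrix.mul_apply, hK, Finset.mul_sum, ← Finset.sum_neg_distrib]
        refine Finset.sum_le_sum fun l _ => ?_
        have habs : |(C ^ N) i l * B l j| ≤ t ^ N * (v i / v l * |B l j|) := by
          rw [abs_mul, abs_of_nonneg (hpow N i l)]
          calc (C ^ N) i l * |B l j| ≤ t ^ N * v i / v l * |B l j| :=
                mul_le_mul_of_nonneg_right (hentry N i l) (abs_nonneg _)
            _ = t ^ N * (v i / v l * |B l j|) := by ring
        have := neg_abs_le ((C ^ N) i l * B l j)
        linarith
      linarith
    have htend : Filter.Tendsto (fun N : ℕ => -(t ^ N * K)) Filter.atTop (nhds 0) := by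
      have := ((tendsto_pow_atTop_nhds_zero_of_lt_one ht0 ht1).mul_const K).neg
      simpa using this
    exact le_of_tendsto htend (Filter.Eventually.of_forall hbd)
  -- assemble
  have hfact : (lam • (1 : Matrix (Fin s) (Fin s) ℝ) - A) * (lam⁻¹ • B) = 1 := by
    have hexp : lam • (1 : Matrix (Fin s) (Fin s) ℝ) - A = lam • (1 - C) := by
      rw [smul_sub, hCdef, smul_smul, mul_inv_cancel₀ hlam.ne', one_smul]
    rw [hexp, Matrix.smul_mul, Matrix.mul_smul, smul_smul, mul_inv_cancel₀ hlam.ne', hB1, one_smul]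
  refine ⟨Matrix.isUnit_det_of_right_inverse hfact, ?_⟩
  intro i j
  rw [Matrix.inv_eq_right_inv hfact]
  simp only [Matrix.smul_apply, smul_eq_mul]
  exact mul_nonneg (inv_nonneg.2 hlam.le) (hBnn i j)

end aux1

lemma perm_lt {k : ℕ} (σ : Equiv.Perm (Fin k)) (h : σ ≠ 1) : ∃ i, σ i < i := by
  by_contra hc
  push_neg at hc
  have hle : ∀ i : Fin k, (i : ℕ) ≤ (σ i : ℕ) := fun i => hc i
  have hsum : ∑ i : Fin k, ((i : ℕ)) = ∑ i : Fin k, ((σ i : ℕ)) :=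
    (Equiv.sum_comp σ (fun i => (i : ℕ))).symm
  have := (Finset.sum_eq_sum_iff_of_le (fun i _ => hle i)).1 hsum
  exact h (Equiv.ext fun i => Fin.val_injective ((this i (Finset.mem_univ i)).symm))

lemma det_shift_pos {k : ℕ} (M : Matrix (Fin k) (Fin k) ℝ)
    (hnn : ∀ i j, 0 ≤ M i j) (h1 : ∀ i j, M i j ≤ 1) (Mb : ℝ) (hMb : 0 ≤ Mb)
    (hk : 1 ≤ k)
    (hub : ∀ i j : Fin k, i < j → M i j ≤ Mb) (μ : ℝ) (hμ : 1/2 ≤ μ)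
    (hsmall : (Nat.factorial k : ℝ) * Mb * 3 ^ (k - 1) < 1/2) :
    0 < (M + μ • (1 : Matrix (Fin k) (Fin k) ℝ)).det := by
  have hμ0 : 0 < μ := lt_of_lt_of_le (by norm_num) hμ
  set A := M + μ • (1 : Matrix (Fin k) (Fin k) ℝ) with hA
  have hAapp : ∀ i j, A i j = if i = j then M i j + μ else M i j := by
    intro i j
    by_cases h : i = j <;> simp [hA, Matrix.one_apply, h]
  have hAnn : ∀ i j, 0 ≤ A i j := by
    intro i j; rw [hAapp]
    by_cases h : i = j
    · subst h; simp; linarith [hnn i i]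
    · simp [h]; exact hnn i j
  have hAub : ∀ i j, A i j ≤ 1 + μ := by
    intro i j; rw [hAapp]
    by_cases h : i = j
    · subst h; simp; linarith [h1 i i]
    · simp [h]; linarith [h1 i j]
  have hmain : μ ^ k ≤ ∏ i, A i i := by
    calc μ ^ k = ∏ _i : Fin k, μ := by simp [Finset.prod_const]
      _ ≤ ∏ i, A i i := by
          refine Finset.prod_le_prod (fun i _ => hμ0.le) (fun i _ => ?_)
          rw [hAapp, if_pos rfl]
          linarith [hnn i i]
  have hterm : ∀ σ ∈ Finset.univ.erase (1 : Equiv.Perm (Fin k)),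
      |Equiv.Perm.sign σ • ∏ i, A (σ i) i| ≤ Mb * (1 + μ) ^ (k - 1) := by
    intro σ hσ
    have hσ1 : σ ≠ 1 := (Finset.mem_erase.1 hσ).1
    obtain ⟨i₀, hi₀⟩ := perm_lt σ hσ1
    have habs : |Equiv.Perm.sign σ • ∏ i, A (σ i) i| = ∏ i, A (σ i) i := by
      rcases Int.units_eq_one_or (Equiv.Perm.sign σ) with h | h <;>
        simp [h, abs_of_nonneg, Finset.prod_nonneg fun i _ => hAnn (σ i) i]
    rw [habs, ← Finset.mul_prod_erase _ _ (Finset.mem_univ i₀)]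
    have h1' : A (σ i₀) i₀ ≤ Mb := by
      rw [hAapp, if_neg (fun h => absurd h (ne_of_lt hi₀))]
      exact hub _ _ hi₀
    have h2' : ∏ i ∈ Finset.univ.erase i₀, A (σ i) i ≤ (1 + μ) ^ (k - 1) := by
      calc ∏ i ∈ Finset.univ.erase i₀, A (σ i) i
          ≤ ∏ _i ∈ Finset.univ.erase i₀, (1 + μ) :=
            Finset.prod_le_prod (fun i _ => hAnn _ _) (fun i _ => hAub _ _)
        _ = (1 + μ) ^ (k - 1) := by
            rw [Finset.prod_const, Finset.card_erase_of_mem (Finset.mem_univ i₀)]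
            simp
    exact mul_le_mul h1' h2' (Finset.prod_nonneg fun i _ => hAnn _ _) hMb
  have hrest : -((Nat.factorial k : ℝ) * (Mb * (1 + μ) ^ (k - 1))) ≤
      ∑ σ ∈ Finset.univ.erase (1 : Equiv.Perm (Fin k)), Equiv.Perm.sign σ • ∏ i, A (σ i) i := by
    have hcard : ((Finset.univ.erase (1 : Equiv.Perm (Fin k))).card : ℝ)
        ≤ (Nat.factorial k : ℝ) := by
      have h0 := Finset.card_le_card (Finset.erase_subset (1 : Equiv.Perm (Fin k)) Finset.univ)
      have h2 : (Finset.univ : Finset (Equiv.Perm (Fin k))).card = Nat.factorial k := by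
        simp [Fintype.card_perm]
      rw [h2] at h0
      exact_mod_cast h0
    have hnn2 : (0:ℝ) ≤ Mb * (1 + μ) ^ (k - 1) := by positivity
    have hstep : ((Finset.univ.erase (1 : Equiv.Perm (Fin k))).card : ℝ)
        • (-(Mb * (1 + μ) ^ (k - 1))) ≤
        ∑ σ ∈ Finset.univ.erase (1 : Equiv.Perm (Fin k)),
          Equiv.Perm.sign σ • ∏ i, A (σ i) i := by
      rw [Nat.cast_smul_eq_nsmul]
      refine Finset.card_nsmul_le_sum _ _ _ (fun σ hσ => ?_)
      have h4 := hterm σ hσ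
      have h5 := neg_abs_le (Equiv.Perm.sign σ • ∏ i, A (σ i) i)
      linarith
    refine le_trans ?_ hstep
    rw [smul_eq_mul]
    nlinarith
  have hfin : (Nat.factorial k : ℝ) * (Mb * (1 + μ) ^ (k - 1)) < μ ^ k := by
    have h3 : (1 + μ) ^ (k - 1) ≤ (3 * μ) ^ (k - 1) :=
      pow_le_pow_left₀ (by linarith) (by linarith) _
    have hμk : μ ^ k = μ * μ ^ (k - 1) := by
      rw [← pow_succ']
      congr 1
      omega
    have h4 : (Nat.factorial k : ℝ) * (Mb * (1 + μ) ^ (k - 1))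
        ≤ ((Nat.factorial k : ℝ) * Mb * 3 ^ (k - 1)) * μ ^ (k - 1) := by
      calc (Nat.factorial k : ℝ) * (Mb * (1 + μ) ^ (k - 1))
          ≤ (Nat.factorial k : ℝ) * (Mb * (3 * μ) ^ (k - 1)) := by gcongr
        _ = ((Nat.factorial k : ℝ) * Mb * 3 ^ (k - 1)) * μ ^ (k - 1) := by
            rw [mul_pow]; ring
    have h5 : ((Nat.factorial k : ℝ) * Mb * 3 ^ (k - 1)) * μ ^ (k - 1) < μ * μ ^ (k - 1) := by
      have h6 : (0:ℝ) < μ ^ (k - 1) := pow_pos hμ0 _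
      have h7 : (Nat.factorial k : ℝ) * Mb * 3 ^ (k - 1) < μ := lt_of_lt_of_le hsmall hμ
      nlinarith
    rw [hμk]; linarith
  rw [Matrix.det_apply,
    ← Finset.sum_erase_add _ _ (Finset.mem_univ (1 : Equiv.Perm (Fin k)))]
  have hid : (Equiv.Perm.sign (1 : Equiv.Perm (Fin k))) • ∏ i, A ((1 : Equiv.Perm (Fin k)) i) i
      = ∏ i, A i i := by simp
  rw [hid]
  linarith

lemma eval_charpoly' {k : ℕ} (M : Matrix (Fin k) (Fin k) ℝ) (x : ℝ) :
    (M.charpoly).eval x = (x • (1: Matrix (Fin k) (Fin k) ℝ) - M).det := by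
  rw [Matrix.charpoly, eval_det, matPolyEquiv_eval_eq_map]
  congr 1
  ext i j
  by_cases h : i = j
  · subst h; simp [charmatrix_apply_eq, Matrix.one_apply]
  · simp [charmatrix_apply_ne _ _ _ h, Matrix.one_apply, h]

lemma uniq_root (s : ℕ) (Q : Matrix (Fin (s+1)) (Fin (s+1)) ℝ)
    (hent : ∀ i j, Q i j ∈ Set.Icc (0:ℝ) 1)
    (eps θ : ℝ)
    (v : Fin s → ℝ) (hv : ∀ i, 0 < v i)
    (hrow : ∀ i, ((Q.submatrix Fin.succ Fin.succ).mulVec v) i ≤ θ * v i)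
    (hth0 : 0 ≤ θ) (hthe : θ < 1 - eps) :
    ∀ l₁ ∈ Set.Icc (1 - eps) (1:ℝ), ∀ l₂ ∈ Set.Icc (1 - eps) (1:ℝ),
      (Q.charpoly).eval l₁ = 0 → (Q.charpoly).eval l₂ = 0 → l₁ = l₂ := by
  set Q' : Matrix (Fin s) (Fin s) ℝ := Q.submatrix Fin.succ Fin.succ with hQ'
  have hQ'nn : ∀ i j, 0 ≤ Q' i j := fun i j => (hent _ _).1
  set a : Fin s → ℝ := fun j => Q 0 j.succ with ha
  set b : Fin s → ℝ := fun i => Q i.succ 0 with hb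
  have hkey : ∀ lam ∈ Set.Icc (1 - eps) (1:ℝ), (Q.charpoly).eval lam = 0 →
      lam = Q 0 0 + a ⬝ᵥ ((lam • (1 : Matrix (Fin s) (Fin s) ℝ) - Q')⁻¹.mulVec b) := by
    intro lam hmem hev
    have hlt : θ < lam := lt_of_lt_of_le hthe hmem.1
    obtain ⟨hDet, hDnn⟩ := matINV Q' v hv hQ'nn θ lam hth0 hlt hrow
    set D : Matrix (Fin s) (Fin s) ℝ := lam • (1 : Matrix (Fin s) (Fin s) ℝ) - Q' with hD
    have hdet0 : (lam • (1 : Matrix (Fin (s+1)) (Fin (s+1)) ℝ) - Q).det = 0 := by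
      rw [← eval_charpoly']; exact hev
    obtain ⟨x, hx0, hxk⟩ := Matrix.exists_mulVec_eq_zero_iff.2 hdet0
    have hPx : Q.mulVec x = lam • x := by
      rw [Matrix.sub_mulVec, Matrix.smul_mulVec, Matrix.one_mulVec] at hxk
      have := sub_eq_zero.1 hxk
      exact this.symm
    set x' : Fin s → ℝ := fun i => x i.succ with hx'def
    have hrowi : ∀ i : Fin s, lam * x i.succ = Q i.succ 0 * x 0 + ∑ j : Fin s, Q' i j * x' j := by
      intro i
      have h2 : Q.mulVec x i.succ = lam * x i.succ := by rw [hPx]; rfl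
      rw [show Q.mulVec x i.succ = ∑ j, Q i.succ j * x j from rfl, Fin.sum_univ_succ] at h2
      rw [← h2]
      rfl
    have hDx : D.mulVec x' = x 0 • b := by
      funext i
      show (D.mulVec x') i = x 0 * b i
      rw [hD, Matrix.sub_mulVec, Matrix.smul_mulVec, Matrix.one_mulVec]
      have h3 : (Q'.mulVec x') i = ∑ j, Q' i j * x' j := rfl
      have h4 := hrowi i
      simp only [Pi.sub_apply, Pi.smul_apply, smul_eq_mul]
      rw [h3, hb]
      have : x' i = x i.succ := rfl
      rw [this]
      linarith
    have hx00 : x 0 ≠ 0 := by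
      intro h0
      have hz : D.mulVec x' = 0 := by rw [hDx, h0, zero_smul]
      have h1 : D⁻¹.mulVec (D.mulVec x') = x' := by
        rw [Matrix.mulVec_mulVec, Matrix.nonsing_inv_mul _ hDet, Matrix.one_mulVec]
      rw [hz, Matrix.mulVec_zero] at h1
      apply hx0
      funext i
      refine Fin.cases ?_ ?_ i
      · exact h0
      · intro j; exact (congrFun h1 j).symm
    have hx'eq : x' = x 0 • D⁻¹.mulVec b := by
      have h1 : D⁻¹.mulVec (D.mulVec x') = x' := by
        rw [Matrix.mulVec_mulVec, Matrix.nonsing_inv_mul _ hDet, Matrix.one_mulVec]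
      rw [hDx, Matrix.mulVec_smul] at h1
      exact h1.symm
    have h0r : lam * x 0 = Q 0 0 * x 0 + ∑ j : Fin s, a j * x' j := by
      have h2 : Q.mulVec x 0 = lam * x 0 := by rw [hPx]; rfl
      rw [show Q.mulVec x 0 = ∑ j, Q 0 j * x j from rfl, Fin.sum_univ_succ] at h2
      rw [← h2]
    have hsub : ∑ j : Fin s, a j * x' j = x 0 * (a ⬝ᵥ D⁻¹.mulVec b) := by
      rw [dotProduct, Finset.mul_sum]
      refine Finset.sum_congr rfl fun j _ => ?_
      rw [hx'eq]
      simp only [Pi.smul_apply, smul_eq_mul]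
      ring
    rw [hsub] at h0r
    apply mul_left_cancel₀ hx00
    show x 0 * lam = x 0 * (Q 0 0 + a ⬝ᵥ D⁻¹.mulVec b)
    ring_nf
    ring_nf at h0r
    linarith
  intro l₁ h1m l₂ h2m he1 he2
  have e1 := hkey l₁ h1m he1
  have e2 := hkey l₂ h2m he2
  obtain ⟨hd1, hn1⟩ := matINV Q' v hv hQ'nn θ l₁ hth0 (lt_of_lt_of_le hthe h1m.1) hrow
  obtain ⟨hd2, hn2⟩ := matINV Q' v hv hQ'nn θ l₂ hth0 (lt_of_lt_of_le hthe h2m.1) hrow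
  set D₁ : Matrix (Fin s) (Fin s) ℝ := l₁ • (1 : Matrix (Fin s) (Fin s) ℝ) - Q' with hD₁
  set D₂ : Matrix (Fin s) (Fin s) ℝ := l₂ • (1 : Matrix (Fin s) (Fin s) ℝ) - Q' with hD₂
  have h12 : D₂ - D₁ = (l₂ - l₁) • (1 : Matrix (Fin s) (Fin s) ℝ) := by
    rw [hD₁, hD₂, sub_smul]
    abel
  have hres : D₁⁻¹ - D₂⁻¹ = (l₂ - l₁) • (D₁⁻¹ * D₂⁻¹) := by
    calc D₁⁻¹ - D₂⁻¹ = D₁⁻¹ * (D₂ * D₂⁻¹) - (D₁⁻¹ * D₁) * D₂⁻¹ := by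
          rw [Matrix.mul_nonsing_inv _ hd2, Matrix.nonsing_inv_mul _ hd1, mul_one, one_mul]
      _ = D₁⁻¹ * (D₂ - D₁) * D₂⁻¹ := by noncomm_ring
      _ = (l₂ - l₁) • (D₁⁻¹ * D₂⁻¹) := by
          rw [h12, Matrix.mul_smul, Matrix.smul_mul, Matrix.mul_one]
  set T : ℝ := a ⬝ᵥ ((D₁⁻¹ * D₂⁻¹).mulVec b) with hT
  have hT0 : 0 ≤ T := by
    refine Finset.sum_nonneg fun j _ => mul_nonneg (hent _ _).1 ?_
    show (0:ℝ) ≤ ∑ l, (D₁⁻¹ * D₂⁻¹) j l * b l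
    refine Finset.sum_nonneg fun l _ => mul_nonneg ?_ (hent _ _).1
    rw [Matrix.mul_apply]
    exact Finset.sum_nonneg fun m _ => mul_nonneg (hn1 _ _) (hn2 _ _)
  have heq : l₁ - l₂ = (l₂ - l₁) * T := by
    have : l₁ - l₂ = a ⬝ᵥ ((D₁⁻¹ - D₂⁻¹).mulVec b) := by
      rw [Matrix.sub_mulVec, dotProduct_sub]
      linarith [e1, e2]
    rw [hres, Matrix.smul_mulVec, dotProduct_smul, smul_eq_mul] at this
    exact this
  have hzero : (l₁ - l₂) * (1 + T) = 0 := by linear_combination heq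
  rcases mul_eq_zero.1 hzero with h | h
  · linarith
  · linarith

theorem char_poly_spectral_gap
    (k : ℕ) (hk : 2 ≤ k)
    (P : ℕ → Matrix (Fin k) (Fin k) ℝ)
    (hentries : ∀ n (i j : Fin k), P n i j ∈ Set.Icc (0 : ℝ) 1)
    (hupper : ∀ i j : Fin k, i < j →
      (fun n : ℕ => P n i j) =O[atTop] fun n : ℕ => 1 / (n : ℝ))
    (c : ℕ → ℝ) (hcpos : ∀ n, 0 < c n)
    (hdiag : ∀ (i : Fin k), 1 ≤ (i : ℕ) → ∀ n, P n i i ≤ 1 - c n)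
    (hcomega : (fun n : ℕ => ((n : ℝ)) ^ (-(1 / ((k : ℝ) - 1)))) =o[atTop] c) :
    ∀ᶠ n in atTop,
      (∀ l₁ ∈ Set.Icc (1 - c n ^ (k - 1) / ((k - 1) * 2 ^ k)) (1 : ℝ),
        ∀ l₂ ∈ Set.Icc (1 - c n ^ (k - 1) / ((k - 1) * 2 ^ k)) (1 : ℝ),
          ((P n).charpoly).eval l₁ = 0 → ((P n).charpoly).eval l₂ = 0 → l₁ = l₂) ∧
      (∀ l : ℝ, l ≤ -(1 / 2) → ((P n).charpoly).eval l ≠ 0) := by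
  obtain ⟨s, rfl⟩ : ∃ s, k = s + 1 := ⟨k - 1, by omega⟩
  have hs : 1 ≤ s := by omega
  have h2s : (0:ℝ) < (s:ℝ) := by exact_mod_cast Nat.lt_of_lt_of_le Nat.zero_lt_one hs
  have hcast : ((s+1 : ℕ) : ℝ) - 1 = (s:ℝ) := by push_cast; ring
  -- c n ≤ 1
  have hc1 : ∀ n, c n ≤ 1 := by
    intro n
    have h1 := hdiag ⟨1, by omega⟩ (by simp) n
    have h2 := (hentries n ⟨1, by omega⟩ ⟨1, by omega⟩).1
    linarith
  -- a uniform O(1/n) constant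
  have key : ∀ p : Fin (s+1) × Fin (s+1), ∃ Cp : ℝ, 0 ≤ Cp ∧
      ∀ᶠ n : ℕ in atTop, p.1 < p.2 → P n p.1 p.2 ≤ Cp / n := by
    intro p
    by_cases h : p.1 < p.2
    · obtain ⟨cp, hcp, hbnd⟩ := (hupper p.1 p.2 h).exists_pos
      refine ⟨cp, hcp.le, ?_⟩
      filter_upwards [hbnd.bound, eventually_ge_atTop 1] with n hn hn1 _
      have hn0 : (0:ℝ) < n := by exact_mod_cast Nat.lt_of_lt_of_le Nat.zero_lt_one hn1
      rw [Real.norm_eq_abs, Real.norm_eq_abs, abs_of_nonneg (hentries n _ _).1,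
        abs_of_nonneg (by positivity : (0:ℝ) ≤ 1 / (n:ℝ))] at hn
      calc P n p.1 p.2 ≤ cp * (1/(n:ℝ)) := hn
        _ = cp / n := by ring
    · exact ⟨0, le_rfl, Filter.Eventually.of_forall fun n hlt => absurd hlt h⟩
  choose Cf hCf0 hCf using key
  set Cb : ℝ := ∑ p : Fin (s+1) × Fin (s+1), Cf p with hCbdef
  have hCb0 : 0 ≤ Cb := Finset.sum_nonneg fun p _ => hCf0 p
  have hCfle : ∀ p, Cf p ≤ Cb := fun p =>
    Finset.single_le_sum (fun q _ => hCf0 q) (Finset.mem_univ p)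
  have hub : ∀ᶠ n : ℕ in atTop, ∀ i j : Fin (s+1), i < j → P n i j ≤ Cb / n := by
    filter_upwards [Filter.eventually_all.2 hCf, eventually_ge_atTop 1] with n hn hn1 i j hij
    have hn0 : (0:ℝ) < n := by exact_mod_cast Nat.lt_of_lt_of_le Nat.zero_lt_one hn1
    calc P n i j ≤ Cf (i, j) / n := hn (i, j) hij
      _ ≤ Cb / n := by gcongr; exact hCfle (i, j)
  set δ : ℝ := (2 * (s:ℝ) * (1 + Cb))⁻¹ with hδdef
  have hδ0 : 0 < δ := by
    rw [hδdef]
    have : (0:ℝ) < 2 * (s:ℝ) * (1 + Cb) := by nlinarith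
    exact inv_pos.2 this
  have hsmallo := hcomega.def hδ0
  have hsm : ∀ᶠ n : ℕ in atTop,
      (Nat.factorial (s+1) : ℝ) * (Cb / n) * 3 ^ ((s+1) - 1) < 1/2 := by
    have h1 : Filter.Tendsto
        (fun n : ℕ => (Nat.factorial (s+1) : ℝ) * (Cb / n) * 3 ^ ((s+1)-1)) atTop (nhds 0) := by
      have h2 := ((tendsto_const_div_atTop_nhds_zero_nat Cb).const_mul
        ((Nat.factorial (s+1) : ℝ))).mul_const ((3:ℝ) ^ ((s+1)-1))
      simpa using h2
    exact h1.eventually_lt_const (by norm_num)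
  filter_upwards [hub, hsmallo, hsm, eventually_ge_atTop 1] with n hubn hon hsmn hn1
  have hn0 : (0:ℝ) < n := by exact_mod_cast Nat.lt_of_lt_of_le Nat.zero_lt_one hn1
  have hn1' : (1:ℝ) ≤ n := by exact_mod_cast hn1
  have hcn := hcpos n
  have hcn1 := hc1 n
  have hCbn0 : (0:ℝ) ≤ Cb / n := div_nonneg hCb0 hn0.le
  have h1Cb : (0:ℝ) ≤ 1 + Cb := by linarith
  set eps : ℝ := c n ^ s / ((s:ℝ) * 2 ^ (s+1)) with hepsdef
  have hIcceq : (1 : ℝ) - c n ^ (s + 1 - 1) / ((↑(s+1) - 1) * 2 ^ (s+1)) = 1 - eps := by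
    rw [hcast, hepsdef]
    norm_num
  have heps0 : 0 < eps := by
    rw [hepsdef]
    exact div_pos (pow_pos hcn s) (mul_pos h2s (pow_pos (by norm_num) _))
  have hepsle : eps ≤ c n / 4 := by
    rw [hepsdef]
    have h1 : c n ^ s ≤ c n := by
      calc c n ^ s ≤ c n ^ 1 := pow_le_pow_of_le_one hcn.le hcn1 hs
        _ = c n := pow_one _
    have h2 : (4:ℝ) ≤ (s:ℝ) * 2 ^ (s+1) := by
      have h3 : (4:ℝ) ≤ 2 ^ (s+1) := by
        calc (4:ℝ) = 2 ^ 2 := by norm_num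
          _ ≤ 2 ^ (s+1) := pow_le_pow_right₀ (by norm_num) (by omega)
      have h4 : (1:ℝ) ≤ (s:ℝ) := by exact_mod_cast hs
      nlinarith
    exact div_le_div₀ hcn.le h1 (by norm_num) h2
  -- the rpow quantities
  set R : ℝ := (n:ℝ) ^ ((s:ℝ)⁻¹) with hRdef
  set rn : ℝ := (n:ℝ) ^ (-((s:ℝ)⁻¹)) with hrndef
  have hR1 : 1 ≤ R := Real.one_le_rpow hn1' (by positivity)
  have hR0 : 0 < R := lt_of_lt_of_le one_pos hR1
  have hrninv : rn = R⁻¹ := by rw [hrndef, hRdef, Real.rpow_neg hn0.le]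
  have hrn0 : 0 < rn := by rw [hrninv]; exact inv_pos.2 hR0
  have hrnle : rn ≤ δ * c n := by
    have hexp : ((n:ℝ)) ^ (-(1 / (((s+1:ℕ) : ℝ) - 1))) = rn := by
      rw [hrndef, hcast, one_div]
    rw [Real.norm_eq_abs, Real.norm_eq_abs, hexp,
      abs_of_nonneg hrn0.le, abs_of_nonneg hcn.le] at hon
    exact hon
  set θ : ℝ := 1 - c n + (s:ℝ) * (1 + Cb) * rn with hθdef
  have hth0 : 0 ≤ θ := by
    rw [hθdef]
    have : 0 ≤ (s:ℝ) * (1 + Cb) * rn := mul_nonneg (mul_nonneg h2s.le h1Cb) hrn0.le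
    linarith
  have hthe : θ < 1 - eps := by
    have h1 : (s:ℝ) * (1 + Cb) * rn ≤ (s:ℝ) * (1 + Cb) * (δ * c n) :=
      mul_le_mul_of_nonneg_left hrnle (mul_nonneg h2s.le h1Cb)
    have h2 : (s:ℝ) * (1 + Cb) * (δ * c n) = c n / 2 := by
      rw [hδdef]
      field_simp
    rw [hθdef]
    linarith
  -- key rpow identity
  have hRs : (1/(n:ℝ)) * R ^ (s-1 : ℕ) = rn := by
    have h1 : R ^ (s-1 : ℕ) = (n:ℝ) ^ ((s:ℝ)⁻¹ * ((s-1:ℕ):ℝ)) := by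
      rw [Real.rpow_mul hn0.le, Real.rpow_natCast]
    have h2 : (1/(n:ℝ)) = (n:ℝ) ^ (-(1:ℝ)) := by
      rw [Real.rpow_neg_one, one_div]
    rw [h1, h2, ← Real.rpow_add hn0]
    rw [hrndef]
    congr 1
    have h3 : ((s-1:ℕ):ℝ) = (s:ℝ) - 1 := by
      rw [Nat.cast_sub hs]; norm_num
    rw [h3]
    field_simp
    ring
  constructor
  · -- part (a)
    rw [hIcceq]
    set Q := P n with hQdef
    have hrowbound : ∀ i : Fin s,
        ((Q.submatrix Fin.succ Fin.succ).mulVec (fun j : Fin s => R ^ (j:ℕ))) i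
          ≤ θ * R ^ (i:ℕ) := by
      intro i
      have hpowpos : ∀ m : ℕ, (0:ℝ) < R ^ m := fun m => pow_pos hR0 m
      have hdiagb : Q.submatrix Fin.succ Fin.succ i i ≤ 1 - c n := by
        have : (1:ℕ) ≤ (i.succ : ℕ) := by simp [Fin.val_succ]
        exact hdiag i.succ this n
      have hterm : ∀ j : Fin s, j ≠ i →
          Q.submatrix Fin.succ Fin.succ i j * R ^ (j:ℕ)
            ≤ R ^ (i:ℕ) / R + (Cb/n) * R ^ (s-1 : ℕ) := by
        intro j hj
        have hCbn : (0:ℝ) ≤ Cb / n := hCbn0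
        rcases lt_or_gt_of_ne hj with hlt | hgt
        · -- j < i : entry ≤ 1
          have hE : Q.submatrix Fin.succ Fin.succ i j ≤ 1 := (hentries n _ _).2
          have hE0 : 0 ≤ Q.submatrix Fin.succ Fin.succ i j := (hentries n _ _).1
          have hji : (j:ℕ) + 1 ≤ (i:ℕ) := hlt
          have hRj : R ^ (j:ℕ) ≤ R ^ ((i:ℕ) - 1) :=
            pow_le_pow_right₀ hR1 (by omega)
          have hRi : R ^ ((i:ℕ) - 1) = R ^ (i:ℕ) / R := by
            rw [eq_div_iff hR0.ne', ← pow_succ]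
            congr 1
            omega
          have h5 : Q.submatrix Fin.succ Fin.succ i j * R ^ (j:ℕ) ≤ R ^ (i:ℕ) / R := by
            calc Q.submatrix Fin.succ Fin.succ i j * R ^ (j:ℕ) ≤ 1 * R ^ (j:ℕ) :=
                  mul_le_mul_of_nonneg_right hE (hpowpos _).le
              _ = R ^ (j:ℕ) := one_mul _
              _ ≤ R ^ ((i:ℕ) - 1) := hRj
              _ = R ^ (i:ℕ) / R := hRi
          have h6 : (0:ℝ) ≤ (Cb/n) * R ^ (s-1:ℕ) := mul_nonneg hCbn0 (pow_pos hR0 _).le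
          linarith
        · -- i < j : entry ≤ Cb / n
          have hij' : i.succ < j.succ := by
            rw [Fin.succ_lt_succ_iff]; exact hgt
          have hE : Q.submatrix Fin.succ Fin.succ i j ≤ Cb / n := hubn _ _ hij'
          have hE0 : 0 ≤ Q.submatrix Fin.succ Fin.succ i j := (hentries n _ _).1
          have hRj : R ^ (j:ℕ) ≤ R ^ (s-1 : ℕ) :=
            pow_le_pow_right₀ hR1 (by omega)
          have h5 : Q.submatrix Fin.succ Fin.succ i j * R ^ (j:ℕ) ≤ (Cb/n) * R ^ (s-1:ℕ) := by
            apply mul_le_mul hE hRj (hpowpos _).le hCbn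
          have h6 : (0:ℝ) ≤ R ^ (i:ℕ) / R := div_nonneg (pow_pos hR0 _).le hR0.le
          linarith
      show ∑ j, Q.submatrix Fin.succ Fin.succ i j * R ^ (j:ℕ) ≤ θ * R ^ (i:ℕ)
      have hsplit : ∑ j, Q.submatrix Fin.succ Fin.succ i j * R ^ (j:ℕ)
          = Q.submatrix Fin.succ Fin.succ i i * R ^ (i:ℕ)
            + ∑ j ∈ Finset.univ.erase i, Q.submatrix Fin.succ Fin.succ i j * R ^ (j:ℕ) :=
        (Finset.add_sum_erase _ _ (Finset.mem_univ i)).symm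
      rw [hsplit]
      have hb1 : Q.submatrix Fin.succ Fin.succ i i * R ^ (i:ℕ) ≤ (1 - c n) * R ^ (i:ℕ) :=
        mul_le_mul_of_nonneg_right hdiagb (pow_pos hR0 _).le
      have hb2 : ∑ j ∈ Finset.univ.erase i, Q.submatrix Fin.succ Fin.succ i j * R ^ (j:ℕ)
          ≤ (s:ℝ) * (R ^ (i:ℕ) / R + (Cb/n) * R ^ (s-1:ℕ)) := by
        have hbound : (0:ℝ) ≤ R ^ (i:ℕ) / R + (Cb/n) * R ^ (s-1:ℕ) :=
          add_nonneg (div_nonneg (pow_pos hR0 _).le hR0.le)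
            (mul_nonneg hCbn0 (pow_pos hR0 _).le)
        calc ∑ j ∈ Finset.univ.erase i, Q.submatrix Fin.succ Fin.succ i j * R ^ (j:ℕ)
            ≤ ∑ _j ∈ Finset.univ.erase i, (R ^ (i:ℕ) / R + (Cb/n) * R ^ (s-1:ℕ)) :=
              Finset.sum_le_sum fun j hjmem => hterm j (Finset.mem_erase.1 hjmem).1
          _ = ((Finset.univ.erase i).card : ℝ) * (R ^ (i:ℕ) / R + (Cb/n) * R ^ (s-1:ℕ)) := by
              rw [Finset.sum_const, nsmul_eq_mul]
          _ ≤ (s:ℝ) * (R ^ (i:ℕ) / R + (Cb/n) * R ^ (s-1:ℕ)) := by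
              apply mul_le_mul_of_nonneg_right _ hbound
              have : (Finset.univ.erase i).card ≤ s := by
                calc (Finset.univ.erase i).card ≤ (Finset.univ : Finset (Fin s)).card :=
                      Finset.card_le_card (Finset.erase_subset _ _)
                  _ = s := by simp
              exact_mod_cast this
      have hfinal : (1 - c n) * R ^ (i:ℕ) + (s:ℝ) * (R ^ (i:ℕ) / R + (Cb/n) * R ^ (s-1:ℕ))
          ≤ θ * R ^ (i:ℕ) := by
        have hA1 : (s:ℝ) * (R ^ (i:ℕ) / R) = (s:ℝ) * rn * R ^ (i:ℕ) := by
          rw [hrninv]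
          ring
        have hA2 : (s:ℝ) * ((Cb/n) * R ^ (s-1:ℕ)) ≤ (s:ℝ) * Cb * rn * R ^ (i:ℕ) := by
          have h7 : (Cb/n) * R ^ (s-1:ℕ) = Cb * rn := by
            rw [← hRs]; ring
          rw [h7]
          have h8 : (1:ℝ) ≤ R ^ (i:ℕ) := one_le_pow₀ hR1
          have h9 : (0:ℝ) ≤ (s:ℝ) * (Cb * rn) := mul_nonneg h2s.le (mul_nonneg hCb0 hrn0.le)
          calc (s:ℝ) * (Cb * rn) = (s:ℝ) * (Cb * rn) * 1 := by ring
            _ ≤ (s:ℝ) * (Cb * rn) * R ^ (i:ℕ) := mul_le_mul_of_nonneg_left h8 h9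
            _ = (s:ℝ) * Cb * rn * R ^ (i:ℕ) := by ring
        have hexpand : θ * R ^ (i:ℕ)
            = (1 - c n) * R ^ (i:ℕ) + (s:ℝ) * rn * R ^ (i:ℕ) + (s:ℝ) * Cb * rn * R ^ (i:ℕ) := by
          rw [hθdef]; ring
        rw [hexpand]
        have := mul_add ((s:ℝ)) (R ^ (i:ℕ) / R) ((Cb/n) * R ^ (s-1:ℕ))
        linarith [hA1, hA2]
      exact le_trans (add_le_add hb1 hb2) hfinal
    exact uniq_root s Q (hentries n) eps θ (fun j : Fin s => R ^ (j:ℕ))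
      (fun j => pow_pos hR0 _) hrowbound hth0 hthe
  · -- part (b)
    intro l hl
    rw [eval_charpoly']
    have hμ : 1/2 ≤ -l := by linarith
    have hdet := det_shift_pos (P n) (fun i j => (hentries n i j).1)
      (fun i j => (hentries n i j).2) (Cb/n) hCbn0 (by omega)
      (fun i j hij => hubn i j hij) (-l) hμ hsmn
    have hEq : l • (1 : Matrix (Fin (s+1)) (Fin (s+1)) ℝ) - P n
        = -(P n + (-l) • (1 : Matrix (Fin (s+1)) (Fin (s+1)) ℝ)) := by
      rw [neg_add, neg_smul, neg_neg]
      abel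
    rw [hEq, Matrix.det_neg]
    intro h
    rcases mul_eq_zero.1 h with h' | h'
    · exact pow_ne_zero _ (by norm_num : (-1:ℝ) ≠ 0) h'
    · exact hdet.ne' h'
end
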